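/- For all a, b ∈ A and every index i ∈ {1,2,3} one has (a e_i)·(b e_i) = −a b* e₀. -/

import Mathlib

open LaurentPolynomial

/-- `A = ℤ[z, z⁻¹]`, the Laurent polynomial ring over the integers. -/
abbrev A : Type := LaurentPolynomial ℤ

/-- The conjugation `f(z) ↦ f(z⁻¹)` on `A`. -/
noncomputable def conj : A →+* A := (LaurentPolynomial.invert (R := ℤ)).toRingEquiv.toRingHom

/-- The fixed subring `A₀ = {f ∈ A | f* = f}`. -/
noncomputable def A0 : Subring A := RingHom.eqLocus conj (RingHom.id A)

/-- `E = A⁴`. -/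
abbrev E : Type := Fin 4 → A

/-- The norm `N(x) = ∑ₖ xₖ xₖ*`. -/
noncomputable def N (x : E) : A := ∑ k, x k * conj (x k)

/-- The standard `A`-basis vectors of `E = A⁴`. -/
noncomputable def e (k : Fin 4) : E := Pi.single k 1

/-- Yang's multiplication `x ∘ y = (p, q, r, s)`. -/
noncomputable def yang (x y : E) : E :=
  ![x 0 * y 0 - x 1 * conj (y 1) - x 2 * conj (y 2) - x 3 * conj (y 3),
    x 0 * y 1 + x 1 * conj (y 0) + conj (x 2) * conj (y 3) - conj (x 3) * conj (y 2),
    x 0 * y 2 - conj (x 1) * conj (y 3) + x 2 * conj (y 0) + conj (x 3) * conj (y 1),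
    x 0 * y 3 + conj (x 1) * conj (y 2) - conj (x 2) * conj (y 1) + x 3 * conj (y 0)]

/-! ### Auxiliary material -/

noncomputable instance : CoeFun A (fun _ => ℤ → ℤ) := ⟨fun f => ⇑f.coeff⟩

lemma conj_apply' (f : A) (n : ℤ) : conj f n = f (-n) :=
  LaurentPolynomial.invert_apply f n

lemma conj_conj (f : A) : conj (conj f) = f :=
  LaurentPolynomial.involutive_invert f

lemma conj_T (n : ℤ) : conj (T n) = T (-n) :=
  LaurentPolynomial.invert_T n

/-- The polar form of the norm. -/
noncomputable def Bf (x y : E) : A := ∑ k, (x k * conj (y k) + y k * conj (x k))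

lemma N_add (x y : E) : N (x + y) = N x + N y + Bf x y := by
  simp only [N, Bf, Pi.add_apply, map_add]
  rw [← Finset.sum_add_distrib, ← Finset.sum_add_distrib]
  exact Finset.sum_congr rfl fun k _ => by ring

lemma Bf_add_add (p q r s : E) :
    Bf (p + q) (r + s) = Bf p r + Bf p s + Bf q r + Bf q s := by
  simp only [Bf, Pi.add_apply, map_add]
  rw [← Finset.sum_add_distrib, ← Finset.sum_add_distrib, ← Finset.sum_add_distrib]
  exact Finset.sum_congr rfl fun k _ => by ring

lemma Bf_single_right (x : E) (g : A) (j : Fin 4) :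
    Bf x (Pi.single j g) = x j * conj g + g * conj (x j) := by
  rw [Bf, Finset.sum_eq_single j]
  · simp
  · intro k _ hk
    rw [Pi.single_eq_of_ne hk]
    simp
  · simp

lemma N_single (g : A) (j : Fin 4) : N (Pi.single j g) = g * conj g := by
  rw [N, Finset.sum_eq_single j]
  · simp
  · intro k _ hk
    rw [Pi.single_eq_of_ne hk]
    simp
  · simp

lemma smul_e (f : A) (i : Fin 4) : f • e i = Pi.single i f := by
  funext k
  by_cases h : k = i <;>
    simp [e, Pi.single_apply, h]

/-- A finitely supported `2`-periodic function is zero. -/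
lemma periodic_eq_zero (c : A) (h : ∀ n : ℤ, c (n + 2) = c n) : c = 0 := by
  by_contra hc
  have hs : c.coeff.support.Nonempty := Finsupp.support_nonempty_iff.mpr (by simpa using hc)
  set M := c.coeff.support.max' hs with hM
  have hMs : M ∈ c.coeff.support := c.coeff.support.max'_mem hs
  have h2 : M + 2 ∈ c.coeff.support := by
    rw [Finsupp.mem_support_iff] at hMs ⊢
    rw [h M]; exact hMs
  have := c.coeff.support.le_max' _ h2
  omega

lemma mul_conj_coeff_zero (f : A) :
    (f * conj f) 0 = ∑ n ∈ f.coeff.support, (f n) ^ 2 := by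
  rw [AddMonoidAlgebra.mul_apply, Finsupp.sum]
  refine Finset.sum_congr rfl fun a₁ ha₁ => ?_
  rw [Finsupp.sum, Finset.sum_eq_single (-a₁)]
  · rw [if_pos (by ring), conj_apply', neg_neg, sq]
  · intro b _ hb
    rw [if_neg (by omega)]
  · intro hb
    rw [if_pos (by ring), Finsupp.notMem_support_iff.mp hb, mul_zero]

lemma sum_sq_coeff_nonneg (f : A) : 0 ≤ ∑ n ∈ f.coeff.support, (f n) ^ 2 :=
  Finset.sum_nonneg fun _ _ => sq_nonneg _

lemma eq_zero_of_sum_sq (f : A) (h : ∑ n ∈ f.coeff.support, (f n) ^ 2 = 0) : f = 0 := by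
  have h' := (Finset.sum_eq_zero_iff_of_nonneg (fun i _ => sq_nonneg (f i))).mp h
  apply AddMonoidAlgebra.ext
  apply Finsupp.ext
  intro n
  by_cases hn : n ∈ f.coeff.support
  · have h2 := h' n hn
    have hz : (0 : A) n = 0 := rfl
    rw [hz]
    exact pow_eq_zero_iff two_ne_zero |>.mp h2
  · exact Finsupp.notMem_support_iff.mp hn

lemma three_squares (f g h : A)
    (H : f * conj f + g * conj g + h * conj h = 0) :
    f = 0 ∧ g = 0 ∧ h = 0 := by
  have hco : (f * conj f + g * conj g + h * conj h) 0 = (0 : A) 0 := by rw [H]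
  have hadd : (f * conj f + g * conj g + h * conj h) 0
      = (f * conj f) 0 + (g * conj g) 0 + (h * conj h) 0 := rfl
  rw [hadd, mul_conj_coeff_zero, mul_conj_coeff_zero, mul_conj_coeff_zero] at hco
  have hz : (0 : A) 0 = 0 := rfl
  rw [hz] at hco
  have h1 := sum_sq_coeff_nonneg f
  have h2 := sum_sq_coeff_nonneg g
  have h3 := sum_sq_coeff_nonneg h
  refine ⟨eq_zero_of_sum_sq f (by omega), eq_zero_of_sum_sq g (by omega),
    eq_zero_of_sum_sq h (by omega)⟩

/-- Lemma 4.6: for all `a, b ∈ A` and every index `i ∈ {1,2,3}`,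
`(a eᵢ)·(b eᵢ) = −a b* e₀`. -/
theorem square_lemma (mul : E →ₗ[A0] E →ₗ[A0] E)
    (hL : ∀ x y : E, N (mul x y) = N x * N y)
    (hid : ∀ x : E, mul (e 0) x = x ∧ mul x (e 0) = x)
    (hA : ∀ (a : A) (y : E), mul (a • e 0) y = a • y) :
    ∀ (a b : A) (i : Fin 4), i ≠ 0 →
      mul (a • e i) (b • e i) = -((a * conj b) • e 0) := by
  -- polarized Lagrange identities
  have hmul_add_left : ∀ x x' y : E, mul (x + x') y = mul x y + mul x' y := by
    intro x x' y; rw [map_add]; rfl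
  have hL2 : ∀ x x' y : E, Bf (mul x y) (mul x' y) = Bf x x' * N y := by
    intro x x' y
    have h := hL (x + x') y
    rw [hmul_add_left, N_add, N_add, hL x y, hL x' y] at h
    linear_combination h
  have hL3 : ∀ x x' y y' : E,
      Bf (mul x y) (mul x' y') + Bf (mul x y') (mul x' y) = Bf x x' * Bf y y' := by
    intro x x' y y'
    have h := hL2 x x' (y + y')
    have hx : mul x (y + y') = mul x y + mul x y' := map_add (mul x) y y'
    have hx' : mul x' (y + y') = mul x' y + mul x' y' := map_add (mul x') y y'
    rw [hx, hx', Bf_add_add, N_add, hL2 x x' y, hL2 x x' y'] at h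
    linear_combination h
  intro a b i hi
  rw [smul_e, smul_e, smul_e]
  set u : E := Pi.single i a with hu
  set v : E := Pi.single i b with hv
  set P : E := mul u v with hP
  have hu0 : u 0 = 0 := by rw [hu]; simp [Pi.single_eq_of_ne (Ne.symm hi)]
  have hui : u i = a := by rw [hu]; simp
  have hvi : v i = b := by rw [hv]; simp
  -- pairing of P with f•e₀
  have key : ∀ f : A, P 0 * conj f + f * conj (P 0)
      = -(a * conj (f * b) + f * b * conj a) := by
    intro f
    have h := hL3 u (f • e 0) v (e 0)
    rw [hA f (e 0), (hid u).2, hA f v, smul_e] at h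
    have hfv : f • v = Pi.single i (f * b) := by
      funext k
      by_cases hk : k = i
      · subst hk; simp [hv, Pi.single_eq_same]
      · simp [hv, Pi.single_eq_of_ne hk]
    rw [hfv] at h
    rw [Bf_single_right u f 0, hu0] at h
    rw [Bf_single_right u (f * b) i, hui] at h
    rw [Bf_single_right P f 0] at h
    simp only [map_zero, mul_zero, zero_mul, add_zero, zero_add] at h
    linear_combination h
  -- the zero component of P
  have hP0 : P 0 = -(a * conj b) := by
    set c : A := P 0 + a * conj b with hc
    have hcf : ∀ f : A, conj f * c + f * conj c = 0 := by
      intro f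
      have h := key f
      rw [map_mul] at h
      have hcc : conj c = conj (P 0) + conj a * b := by
        rw [hc, map_add, map_mul, conj_conj]
      rw [hc, hcc]
      linear_combination h
    have h1 : ∀ n : ℤ, c n + c (-n) = 0 := by
      intro n
      have h := hcf 1
      rw [map_one, one_mul, one_mul] at h
      have := congrArg (fun q : A => q n) h
      simpa [conj_apply'] using this
    have hsingle : ∀ (m n : ℤ) (g : A), (T m * g : A) n = g (n - m) := by
      intro m n g
      have h := AddMonoidAlgebra.coeff_single_mul_apply g (1 : ℤ) m n
      rw [one_mul] at h
      have hT : (T m : A) = AddMonoidAlgebra.single m 1 := rfl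
      rw [hT, h]
      congr 1
      ring
    have h2 : ∀ n : ℤ, c (n + 1) + c (1 - n) = 0 := by
      intro n
      have h := hcf (T 1)
      rw [conj_T] at h
      have h' := congrArg (fun q : A => q n) h
      try simp only at h'
      have hadd : (T (-1) * c + T 1 * conj c : A) n
          = (T (-1) * c : A) n + (T 1 * conj c : A) n := rfl
      have hz : (0 : A) n = 0 := rfl
      have e1 : (T (-1) * c : A) n = c (n + 1) := by
        rw [hsingle]; norm_num
      have e2 : (T 1 * conj c : A) n = c (1 - n) := by
        rw [hsingle, conj_apply']; congr 1; ring
      rw [hadd, hz, e1, e2] at h'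
      exact h' 
    have hper : ∀ n : ℤ, c (n + 2) = c n := by
      intro n
      have e1 := h2 (n + 1)            -- c (n+2) + c (-n) = 0
      have e2 := h1 n                   -- c n + c (-n) = 0
      have : c (n + 1 + 1) + c (1 - (n + 1)) = 0 := e1
      rw [show n + 1 + 1 = n + 2 by ring, show (1 : ℤ) - (n + 1) = -n by ring] at this
      omega
    have hc0 : c = 0 := periodic_eq_zero c hper
    have hfin : P 0 + a * conj b = 0 := by rw [← hc]; exact hc0
    linear_combination hfin
  -- the other components vanish
  have hNP : P 1 * conj (P 1) + P 2 * conj (P 2) + P 3 * conj (P 3) = 0 := by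
    have h := hL u v
    have hNu : N u = a * conj a := by rw [hu]; exact N_single a i
    have hNv : N v = b * conj b := by rw [hv]; exact N_single b i
    rw [hNu, hNv, N, Fin.sum_univ_four, ← hP, hP0] at h
    have hcP0 : conj (-(a * conj b)) = -(conj a * b) := by
      rw [map_neg, map_mul, conj_conj]
    rw [hcP0] at h
    linear_combination h
  obtain ⟨h1, h2, h3⟩ := three_squares _ _ _ hNP
  funext k
  fin_cases k
  · simp only [Pi.neg_apply, Pi.single_eq_same]
    exact hP0
  · simp only [Pi.neg_apply]
    rw [Pi.single_eq_of_ne (by decide), neg_zero]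
    exact h1
  · simp only [Pi.neg_apply]
    rw [Pi.single_eq_of_ne (by decide), neg_zero]
    exact h2
  · simp only [Pi.neg_apply]
    rw [Pi.single_eq_of_ne (by decide), neg_zero]
    exact h3
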